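/- Let X_1 = X_2 = X_3 = {0,1}, let ~ be the simple staging over the order (X_1, X_2, X_3) with singleton depth-1 stages and all depth-2 vertices in one stage, and let ~' be the staging over the order (X_1, X_3, X_2) with all depth-1 vertices in one stage and depth-2 vertices (x_1, x_3) staged by the value of x_1. Then the induced models of joint distributions of (X_1, X_2, X_3) of ~ and ~' coincide; however, the models of their simplifications differ: the position staging ≈ of ~ satisfies M(≈) = M(~) (the set of strictly positive P with X_3 independent of (X_1, X_2)), while the position staging ≈' of ~' induces the model of strictly positive P with X_2 independent of X_3 given X_1, which strictly contains M(~). Hence two equivalent staged trees can have non-equivalent simplified staged trees (Remark 2). -/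

import Mathlib

/-!
Encoding: joint probability mass functions of three binary variables are
real-valued functions on `Fin 3 → Bool`.  For a given variable order, a
depth-(i-1) vertex (context) is represented by a full assignment (in that order)
of which only the coordinates `k < i` are relevant.
-/

/-- `v` and `w` agree on all coordinates below `i`. -/
def agreeBelow (i : Fin 3) (v w : Fin 3 → Bool) : Prop :=
  ∀ k : Fin 3, k < i → v k = w k

/-- Two depth-(i-1) vertices are in the same position: `(v,z) ~_j (w,z)` for every
`j ∈ {i,…,p}` and every suffix `z`.  The family `samePos rel` is the position
staging (the simplification) of the staging `rel`. -/
def samePos (rel : Fin 3 → (Fin 3 → Bool) → (Fin 3 → Bool) → Prop)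
    (i : Fin 3) (v w : Fin 3 → Bool) : Prop :=
  ∀ j : Fin 3, i ≤ j → ∀ v' w' : Fin 3 → Bool,
    agreeBelow i v' v → agreeBelow i w' w →
    (∀ k : Fin 3, i ≤ k → k < j → v' k = w' k) → rel j v' w'

/-- The staged tree model `M(~)` of a staging given by the stage relations `rel`:
strictly positive pmfs factorizing with conditional pmfs `y` constant on stages. -/
def memModel (rel : Fin 3 → (Fin 3 → Bool) → (Fin 3 → Bool) → Prop)
    (P : (Fin 3 → Bool) → ℝ) : Prop :=
  (∀ x, 0 < P x) ∧ (∑ x, P x = 1) ∧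
    ∃ y : Fin 3 → (Fin 3 → Bool) → Bool → ℝ,
      (∀ i v x, 0 < y i v x) ∧
      (∀ i v, ∑ x, y i v x = 1) ∧
      (∀ i v w, rel i v w → y i v = y i w) ∧
      (∀ x, P x = ∏ i, y i x (x i))

/-- The staging `~` over the order `(X_1, X_2, X_3)`: the two depth-1 vertices are
in different stages and all four depth-2 vertices form a single stage. -/
def relA : Fin 3 → (Fin 3 → Bool) → (Fin 3 → Bool) → Prop :=
  fun i v w => i = 1 → v 0 = w 0

/-- The staging `~'` over the order `(X_1, X_3, X_2)` (coordinates `(x_1, x_3, x_2)`):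
the two depth-1 vertices form a single stage, and the four depth-2 vertices
`(x_1, x_3)` are staged according to the value of `x_1`. -/
def relB : Fin 3 → (Fin 3 → Bool) → (Fin 3 → Bool) → Prop :=
  fun i v w => i = 2 → v 0 = w 0

/-- `X_2` is independent of `X_3` given `X_1` (for strictly positive pmfs `P` on
`{0,1}³` in the original coordinates `(x_1, x_2, x_3)`):
`P(x_1,x_2,x_3) · P(x_1) = P(x_1,x_2) · P(x_1,x_3)`. -/
def condIndep23given1 (P : (Fin 3 → Bool) → ℝ) : Prop :=
  (∀ x, 0 < P x) ∧ (∑ x, P x = 1) ∧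
    ∀ v : Fin 3 → Bool,
      P v * (∑ b : Bool, ∑ c : Bool, P ![v 0, b, c]) =
        (∑ c : Bool, P ![v 0, v 1, c]) * (∑ b : Bool, P ![v 0, b, v 2])


private lemma eta3 (x : Fin 3 → Bool) : ![x 0, x 1, x 2] = x := by
  funext i; fin_cases i <;> simp

private def sw (u : Fin 3 → Bool) : Fin 3 → Bool := ![u 0, u 2, u 1]

private lemma sw_sw (u : Fin 3 → Bool) : sw (sw u) = u := by
  funext i; fin_cases i <;> simp [sw]

private lemma sum_swap (f : (Fin 3 → Bool) → ℝ) :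
    (∑ u : Fin 3 → Bool, f ![u 0, u 2, u 1]) = ∑ x, f x :=
  Fintype.sum_equiv ⟨sw, sw, sw_sw, sw_sw⟩ _ _ (fun _ => rfl)

private def cube : Bool × Bool × Bool ≃ (Fin 3 → Bool) where
  toFun p := ![p.1, p.2.1, p.2.2]
  invFun x := (x 0, x 1, x 2)
  left_inv p := by simp
  right_inv x := eta3 x

private lemma sum_pi3 (f : (Fin 3 → Bool) → ℝ) :
    ∑ x, f x = ∑ a, ∑ b, ∑ c, f ![a, b, c] := by
  rw [← Fintype.sum_equiv cube (fun p => f (cube p)) f (fun p => rfl)]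
  simp [cube, Fintype.sum_prod_type]

private lemma memModel_mono {r r' : Fin 3 → (Fin 3 → Bool) → (Fin 3 → Bool) → Prop}
    (h : ∀ i v w, r' i v w → r i v w) {P : (Fin 3 → Bool) → ℝ} :
    memModel r P → memModel r' P := by
  rintro ⟨h1, h2, y, hpos, hsum, hconst, hfac⟩
  exact ⟨h1, h2, y, hpos, hsum, fun i v w hr => hconst i v w (h i v w hr), hfac⟩

private lemma memModel_congr {r r' : Fin 3 → (Fin 3 → Bool) → (Fin 3 → Bool) → Prop}
    (h : ∀ i v w, r i v w ↔ r' i v w) (P : (Fin 3 → Bool) → ℝ) :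
    memModel r P ↔ memModel r' P :=
  ⟨memModel_mono (fun i v w hr => (h i v w).mpr hr),
   memModel_mono (fun i v w hr => (h i v w).mp hr)⟩

private lemma samePos_relA (i : Fin 3) (v w : Fin 3 → Bool) :
    samePos relA i v w ↔ relA i v w := by
  fin_cases i
  · constructor
    · intro _ h01; exact absurd h01 (by decide)
    · intro _ j hj v' w' hv hw hk h1
      subst h1
      exact hk 0 (by decide) (by decide)
  · constructor
    · intro h _
      exact h 1 (by decide) v w (fun k _ => rfl) (fun k _ => rfl)
        (fun k hk hk' => absurd (hk.trans_lt hk') (lt_irrefl _)) rfl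
    · intro h j hj v' w' hv hw hk h1
      subst h1
      rw [hv 0 (by decide), hw 0 (by decide)]
      exact h rfl
  · constructor
    · intro _ h2; exact absurd h2 (by decide)
    · intro _ j hj v' w' _ _ _ h1
      subst h1
      exact absurd hj (by decide)

private lemma samePos_relB (i : Fin 3) (v w : Fin 3 → Bool) :
    samePos relB i v w ↔ (i ≠ 0 → v 0 = w 0) := by
  fin_cases i
  · constructor
    · intro _ h; exact absurd rfl h
    · intro _ j hj v' w' hv hw hk h2
      subst h2
      exact hk 0 (by decide) (by decide)
  · constructor
    · intro h _
      have := h 2 (by decide) ![v 0, false, false] ![w 0, false, false]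
        (fun k hk => by fin_cases k <;> simp_all)
        (fun k hk => by fin_cases k <;> simp_all)
        (fun k hk hk' => by fin_cases k <;> simp_all)
      simpa using this rfl
    · intro h j hj v' w' hv hw hk h2
      subst h2
      rw [hv 0 (by decide), hw 0 (by decide)]
      exact h (by decide)
  · constructor
    · intro h _
      exact h 2 (by decide) v w (fun k _ => rfl) (fun k _ => rfl)
        (fun k hk hk' => absurd (hk.trans_lt hk') (lt_irrefl _)) rfl
    · intro h j hj v' w' hv hw hk h2
      subst h2
      rw [hv 0 (by decide), hw 0 (by decide)]
      exact h (by decide)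

private lemma part1 (P : (Fin 3 → Bool) → ℝ) :
    memModel relB (fun u => P ![u 0, u 2, u 1]) ↔ memModel relA P := by
  have hP : ∀ x : Fin 3 → Bool, P x = P ![(sw x) 0, (sw x) 2, (sw x) 1] := by
    intro x
    rw [show (![(sw x) 0, (sw x) 2, (sw x) 1] : Fin 3 → Bool) = sw (sw x) from rfl, sw_sw x]
  constructor
  · rintro ⟨hpos, hsum, z, zpos, zsum, zconst, zfac⟩
    refine ⟨fun x => by rw [hP x]; exact hpos (sw x), ?_, ?_⟩
    · calc ∑ x, P x = ∑ x : Fin 3 → Bool, P ![(sw x) 0, (sw x) 2, (sw x) 1] :=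
            Finset.sum_congr rfl (fun x _ => hP x)
        _ = 1 := (sum_swap (fun u => P ![u 0, u 2, u 1])).trans hsum
    · refine ⟨![z 0, (fun v x => z 2 (fun _ => v 0) x), z 1], ?_, ?_, ?_, ?_⟩
      · intro i v x; fin_cases i <;> exact zpos _ _ _
      · intro i v; fin_cases i <;> exact zsum _ _
      · intro i v w h
        fin_cases i
        · exact zconst 0 v w (fun h' => absurd h' (by decide))
        · show (fun x => z 2 (fun _ => v 0) x) = (fun x => z 2 (fun _ => w 0) x)
          rw [h rfl]
        · exact zconst 1 v w (fun h' => absurd h' (by decide))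
      · intro x
        have hf := zfac (sw x)
        rw [Fin.prod_univ_three] at hf
        simp only [sw, Matrix.cons_val_zero, Matrix.cons_val_one, Matrix.head_cons,
          Matrix.cons_val_two, Matrix.tail_cons] at hf
        rw [eta3,
          zconst 0 ![x 0, x 2, x 1] x (fun h' => absurd h' (by decide)),
          zconst 1 ![x 0, x 2, x 1] x (fun h' => absurd h' (by decide)),
          zconst 2 ![x 0, x 2, x 1] (fun _ => x 0) (fun _ => by simp)] at hf
        rw [Fin.prod_univ_three]
        simp only [Matrix.cons_val_zero, Matrix.cons_val_one, Matrix.head_cons,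
          Matrix.cons_val_two, Matrix.tail_cons]
        rw [hf]; ring
  · rintro ⟨hpos, hsum, y, ypos, ysum, yconst, yfac⟩
    refine ⟨fun u => hpos _, (sum_swap P).trans hsum, ?_⟩
    refine ⟨![y 0, y 2, (fun v x => y 1 (fun _ => v 0) x)], ?_, ?_, ?_, ?_⟩
    · intro i v x; fin_cases i <;> exact ypos _ _ _
    · intro i v; fin_cases i <;> exact ysum _ _
    · intro i v w h
      fin_cases i
      · exact yconst 0 v w (fun h' => absurd h' (by decide))
      · exact yconst 2 v w (fun h' => absurd h' (by decide))
      · show (fun x => y 1 (fun _ => v 0) x) = (fun x => y 1 (fun _ => w 0) x)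
        rw [h rfl]
    · intro u
      show P ![u 0, u 2, u 1] = _
      have hf := yfac ![u 0, u 2, u 1]
      rw [Fin.prod_univ_three] at hf
      simp only [Matrix.cons_val_zero, Matrix.cons_val_one, Matrix.head_cons,
        Matrix.cons_val_two, Matrix.tail_cons] at hf
      rw [yconst 0 ![u 0, u 2, u 1] u (fun h' => absurd h' (by decide)),
        yconst 2 ![u 0, u 2, u 1] u (fun h' => absurd h' (by decide)),
        yconst 1 ![u 0, u 2, u 1] (fun _ => u 0) (fun _ => by simp)] at hf
      rw [Fin.prod_univ_three]
      simp only [Matrix.cons_val_zero, Matrix.cons_val_one, Matrix.head_cons,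
        Matrix.cons_val_two, Matrix.tail_cons]
      rw [hf]; ring


private def relC : Fin 3 → (Fin 3 → Bool) → (Fin 3 → Bool) → Prop :=
  fun i v w => i ≠ 0 → v 0 = w 0

private lemma part3C (P : (Fin 3 → Bool) → ℝ) :
    memModel relC (fun u => P ![u 0, u 2, u 1]) ↔ condIndep23given1 P := by
  have hP : ∀ x : Fin 3 → Bool, P x = P ![(sw x) 0, (sw x) 2, (sw x) 1] := by
    intro x
    rw [show (![(sw x) 0, (sw x) 2, (sw x) 1] : Fin 3 → Bool) = sw (sw x) from rfl, sw_sw x]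
  constructor
  · rintro ⟨hpos, hsum, z, zpos, zsum, zconst, zfac⟩
    refine ⟨fun x => by rw [hP x]; exact hpos (sw x),
      (Finset.sum_congr rfl (fun x _ => hP x)).trans
        ((sum_swap (fun u => P ![u 0, u 2, u 1])).trans hsum), ?_⟩
    have key : ∀ t b c : Bool, P ![t, b, c] =
        z 0 (fun _ => t) t * z 1 (fun _ => t) c * z 2 (fun _ => t) b := by
      intro t b c
      have hf := zfac ![t, c, b]
      rw [Fin.prod_univ_three] at hf
      simp only [Matrix.cons_val_zero, Matrix.cons_val_one, Matrix.head_cons,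
        Matrix.cons_val_two, Matrix.tail_cons] at hf
      rw [zconst 0 ![t, c, b] (fun _ => t) (fun h' => absurd rfl h'),
        zconst 1 ![t, c, b] (fun _ => t) (fun _ => by simp),
        zconst 2 ![t, c, b] (fun _ => t) (fun _ => by simp)] at hf
      exact hf
    intro v
    have hv := key (v 0) (v 1) (v 2)
    rw [eta3] at hv
    rw [hv]
    simp only [key, Fintype.sum_bool]
    ring
  · rintro ⟨hpos, hsum, hci⟩
    have hpos1 : ∀ t : Bool, (0:ℝ) < ∑ b : Bool, ∑ c : Bool, P ![t, b, c] := by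
      intro t
      simp only [Fintype.sum_bool]
      exact add_pos (add_pos (hpos _) (hpos _)) (add_pos (hpos _) (hpos _))
    refine ⟨fun u => hpos _, (sum_swap P).trans hsum,
      ![(fun _ x => ∑ b : Bool, ∑ c : Bool, P ![x, b, c]),
        (fun v x => (∑ b : Bool, P ![v 0, b, x]) / (∑ b : Bool, ∑ c : Bool, P ![v 0, b, c])),
        (fun v x => (∑ c : Bool, P ![v 0, x, c]) / (∑ b : Bool, ∑ c : Bool, P ![v 0, b, c]))],
      ?_, ?_, ?_, ?_⟩
    · intro i v x
      fin_cases i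
      · exact hpos1 x
      · refine div_pos ?_ (hpos1 (v 0))
        simp only [Fintype.sum_bool]
        exact add_pos (hpos _) (hpos _)
      · refine div_pos ?_ (hpos1 (v 0))
        simp only [Fintype.sum_bool]
        exact add_pos (hpos _) (hpos _)
    · intro i v
      fin_cases i
      · show ∑ x : Bool, (∑ b : Bool, ∑ c : Bool, P ![x, b, c]) = 1
        rw [← sum_pi3]
        exact hsum
      · show ∑ x : Bool, (∑ b : Bool, P ![v 0, b, x]) / (∑ b : Bool, ∑ c : Bool, P ![v 0, b, c]) = 1
        rw [Fintype.sum_bool, ← add_div, div_eq_one_iff_eq (hpos1 (v 0)).ne']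
        simp only [Fintype.sum_bool]
        try ring
      · show ∑ x : Bool, (∑ c : Bool, P ![v 0, x, c]) / (∑ b : Bool, ∑ c : Bool, P ![v 0, b, c]) = 1
        rw [Fintype.sum_bool, ← add_div, div_eq_one_iff_eq (hpos1 (v 0)).ne']
        simp only [Fintype.sum_bool]
        try ring
    · intro i v w h
      fin_cases i
      · rfl
      · show (fun x => (∑ b : Bool, P ![v 0, b, x]) / (∑ b : Bool, ∑ c : Bool, P ![v 0, b, c]))
            = (fun x => (∑ b : Bool, P ![w 0, b, x]) / (∑ b : Bool, ∑ c : Bool, P ![w 0, b, c]))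
        rw [h (by decide)]
      · show (fun x => (∑ c : Bool, P ![v 0, x, c]) / (∑ b : Bool, ∑ c : Bool, P ![v 0, b, c]))
            = (fun x => (∑ c : Bool, P ![w 0, x, c]) / (∑ b : Bool, ∑ c : Bool, P ![w 0, b, c]))
        rw [h (by decide)]
    · intro u
      have hk := hci ![u 0, u 2, u 1]
      simp only [Matrix.cons_val_zero, Matrix.cons_val_one, Matrix.head_cons,
        Matrix.cons_val_two, Matrix.tail_cons] at hk
      rw [Fin.prod_univ_three]
      show P ![u 0, u 2, u 1] =
        (∑ b : Bool, ∑ c : Bool, P ![u 0, b, c]) *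
          ((∑ b : Bool, P ![u 0, b, u 1]) / (∑ b : Bool, ∑ c : Bool, P ![u 0, b, c])) *
          ((∑ c : Bool, P ![u 0, u 2, c]) / (∑ b : Bool, ∑ c : Bool, P ![u 0, b, c]))
      set D := ∑ b : Bool, ∑ c : Bool, P ![u 0, b, c] with hDdef
      set A := ∑ c : Bool, P ![u 0, u 2, c] with hAdef
      set B := ∑ b : Bool, P ![u 0, b, u 1] with hBdef
      have hD : D ≠ 0 := (hpos1 (u 0)).ne'
      field_simp
      linear_combination hk


private lemma crossA {P : (Fin 3 → Bool) → ℝ} (h : memModel relA P) (u w : Fin 3 → Bool) :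
    P ![u 0, u 1, w 2] * P ![w 0, w 1, u 2] = P u * P w := by
  obtain ⟨-, -, y, -, -, yconst, yfac⟩ := h
  have c0 : ∀ a b, y 0 a = y 0 b := fun a b => yconst 0 a b (fun h' => absurd h' (by decide))
  have c2 : ∀ a b, y 2 a = y 2 b := fun a b => yconst 2 a b (fun h' => absurd h' (by decide))
  have c1 : ∀ a b : Fin 3 → Bool, a 0 = b 0 → y 1 a = y 1 b :=
    fun a b hab => yconst 1 a b (fun _ => hab)
  have e : ∀ x : Fin 3 → Bool, P x = y 0 u (x 0) * y 1 (fun _ => x 0) (x 1) * y 2 u (x 2) := by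
    intro x
    rw [yfac x, Fin.prod_univ_three, c0 x u, c2 x u, c1 x (fun _ => x 0) rfl]
  rw [e u, e w, e ![u 0, u 1, w 2], e ![w 0, w 1, u 2]]
  simp only [Matrix.cons_val_zero, Matrix.cons_val_one, Matrix.head_cons,
    Matrix.cons_val_two, Matrix.tail_cons]
  ring

private noncomputable def Pex : (Fin 3 → Bool) → ℝ := fun x => if x 0 = x 2 then 3/16 else 1/16

private lemma Pex_ci : condIndep23given1 Pex := by
  refine ⟨fun x => ?_, ?_, fun v => ?_⟩
  · simp only [Pex]; split_ifs <;> norm_num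
  · rw [sum_pi3]
    simp only [Pex, Fintype.sum_bool, Matrix.cons_val_zero, Matrix.cons_val_one,
      Matrix.head_cons, Matrix.cons_val_two, Matrix.tail_cons]
    norm_num
  · cases h0 : v 0 <;> cases h2 : v 2 <;>
      simp only [Pex, h0, h2, Fintype.sum_bool, Matrix.cons_val_zero, Matrix.cons_val_one,
        Matrix.head_cons, Matrix.cons_val_two, Matrix.tail_cons] <;>
      norm_num

private lemma Pex_notA : ¬ memModel relA Pex := by
  intro h
  have hc := crossA h ![false, false, false] ![true, false, true]
  simp only [Pex, Matrix.cons_val_zero, Matrix.cons_val_one, Matrix.head_cons,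
    Matrix.cons_val_two, Matrix.tail_cons] at hc
  norm_num at hc


private lemma part3 (P : (Fin 3 → Bool) → ℝ) :
    memModel (samePos relB) (fun u => P ![u 0, u 2, u 1]) ↔ condIndep23given1 P :=
  (memModel_congr (fun i v w => samePos_relB i v w) _).trans (part3C P)

private lemma part4 (P : (Fin 3 → Bool) → ℝ) (h : memModel relA P) :
    memModel (samePos relB) (fun u => P ![u 0, u 2, u 1]) := by
  refine memModel_mono ?_ ((part1 P).mpr h)
  intro i v w hs h2
  exact (samePos_relB i v w).mp hs (by rw [h2]; decide)


/--
**Remark 2.**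
The stagings `~` (`relA`, order `(X_1, X_2, X_3)`, simple) and `~'` (`relB`, order
`(X_1, X_3, X_2)`) induce the same model of joint distributions of
`(X_1, X_2, X_3)`; however, the models of their simplifications differ: the
position staging `≈` of `~` satisfies `M(≈) = M(~)`, while the position staging
`≈'` of `~'` induces the model of strictly positive `P` with `X_2 ⫫ X_3 | X_1`,
which strictly contains `M(~)`.  Hence two equivalent staged trees can have
non-equivalent simplified staged trees.
-/
theorem equivalent_trees_nonequivalent_simplifications :
    (∀ P : (Fin 3 → Bool) → ℝ,
        memModel relB (fun u => P ![u 0, u 2, u 1]) ↔ memModel relA P) ∧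
      (∀ P : (Fin 3 → Bool) → ℝ,
        memModel (samePos relA) P ↔ memModel relA P) ∧
      (∀ P : (Fin 3 → Bool) → ℝ,
        memModel (samePos relB) (fun u => P ![u 0, u 2, u 1]) ↔
          condIndep23given1 P) ∧
      (∀ P : (Fin 3 → Bool) → ℝ,
        memModel relA P → memModel (samePos relB) (fun u => P ![u 0, u 2, u 1])) ∧
      (∃ P : (Fin 3 → Bool) → ℝ,
        memModel (samePos relB) (fun u => P ![u 0, u 2, u 1]) ∧ ¬ memModel relA P) := by
    refine ⟨part1, fun P => memModel_congr (fun i v w => samePos_relA i v w) P, part3,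
    part4,
    ⟨Pex, (part3 Pex).mpr Pex_ci, Pex_notA⟩⟩
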